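/- Suppose the LSTM system is δISS in X and U, i.e. there exist a class-KL function β and a class-K∞ function γ such that any two trajectories starting in X with inputs in U satisfy ‖x_{a,k} − x_{b,k}‖ ≤ β(‖x_{a,0} − x_{b,0}‖, k) + γ(max_{0≤h<k}‖u_{a,h} − u_{b,h}‖). Then for every u ∈ U and every y ∈ ℝᵖ there exist a unique x* ∈ X and a unique d* ∈ ℝᵖ such that x* = f(x*, u) and y = g(x*) + d*. -/

import Mathlib

open Matrix Filter Set
open scoped ENNReal NNReal BigOperators

noncomputable section

namespace LSTMmpc

/-- The logistic sigmoid `σ(z) = 1/(1+e^{-z})`. -/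
def sigmoid (z : ℝ) : ℝ := 1 / (1 + Real.exp (-z))

/-- Euclidean norm of a finite real vector. -/
def enorm {k : ℕ} (v : Fin k → ℝ) : ℝ := Real.sqrt (∑ i, v i ^ 2)

/-- Sup (∞) norm of a finite real vector. -/
def vinf {k : ℕ} (v : Fin k → ℝ) : ℝ := ⨆ i, |v i|

/-- Spectral (ℓ²-induced) norm of a real matrix. -/
def spec {a b : ℕ} (M : Matrix (Fin a) (Fin b) ℝ) : ℝ :=
  ⨆ v : {v : Fin b → ℝ // enorm v ≤ 1}, enorm (M.mulVec v.1)

/-- Induced ∞-norm (maximum absolute row sum) of the horizontal block `[s•A, B, v]`. -/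
def rowNorm3 {n m : ℕ} (s : ℝ) (A : Matrix (Fin n) (Fin m) ℝ)
    (B : Matrix (Fin n) (Fin n) ℝ) (v : Fin n → ℝ) : ℝ :=
  ⨆ i, (∑ j, |s * A i j| + ∑ j, |B i j| + |v i|)

/-- Induced ∞-norm of the horizontal block `[s•A, B, v, C, t•D]`. -/
def rowNorm5 {n m p : ℕ} (s : ℝ) (A : Matrix (Fin n) (Fin m) ℝ)
    (B : Matrix (Fin n) (Fin n) ℝ) (v : Fin n → ℝ)
    (C : Matrix (Fin n) (Fin n) ℝ) (t : ℝ) (D : Matrix (Fin n) (Fin p) ℝ) : ℝ :=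
  ⨆ i, (∑ j, |s * A i j| + ∑ j, |B i j| + |v i| + ∑ j, |C i j| + ∑ j, |t * D i j|)

/-- Weighted norm `‖v‖_P = √(vᵀ P v)`. -/
def wnorm {k : ℕ} (P : Matrix (Fin k) (Fin k) ℝ) (v : Fin k → ℝ) : ℝ :=
  Real.sqrt (v ⬝ᵥ P.mulVec v)

/-- Minimum eigenvalue of a hermitian real matrix. -/
def lamMin {k : ℕ} (P : Matrix (Fin k) (Fin k) ℝ) (hP : P.IsHermitian) : ℝ :=
  ⨅ i, hP.eigenvalues i

/-- Maximum eigenvalue of a hermitian real matrix. -/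
def lamMax {k : ℕ} (P : Matrix (Fin k) (Fin k) ℝ) (hP : P.IsHermitian) : ℝ :=
  ⨆ i, hP.eigenvalues i

/-- Spectral radius (over `ℂ`) of a real square matrix. -/
def specRad {k : ℕ} (M : Matrix (Fin k) (Fin k) ℝ) : ℝ≥0∞ :=
  spectralRadius ℂ (M.map (fun x : ℝ => (x : ℂ)))

/-- Class `K∞` functions `[0,∞) → [0,∞)`. -/
def IsClassKInf (γ : ℝ → ℝ) : Prop :=
  ContinuousOn γ (Set.Ici 0) ∧ γ 0 = 0 ∧ StrictMonoOn γ (Set.Ici 0) ∧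
    (∀ s, 0 ≤ s → 0 ≤ γ s) ∧ Tendsto γ atTop atTop

/-- Class `KL` functions. -/
def IsClassKL (β : ℝ → ℕ → ℝ) : Prop :=
  (∀ k, ContinuousOn (fun s => β s k) (Set.Ici 0) ∧
      StrictMonoOn (fun s => β s k) (Set.Ici 0) ∧ β 0 k = 0) ∧
  (∀ s, 0 < s → StrictAnti (fun k => β s k) ∧ Tendsto (fun k => β s k) atTop (nhds 0)) ∧
  (∀ s, 0 ≤ s → ∀ k, 0 ≤ β s k)

/-- Weights of an LSTM network. -/
structure LSTM (n m p : ℕ) where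
  Wf : Matrix (Fin n) (Fin m) ℝ
  Wi : Matrix (Fin n) (Fin m) ℝ
  Wc : Matrix (Fin n) (Fin m) ℝ
  Wo : Matrix (Fin n) (Fin m) ℝ
  Uf : Matrix (Fin n) (Fin n) ℝ
  Ui : Matrix (Fin n) (Fin n) ℝ
  Uc : Matrix (Fin n) (Fin n) ℝ
  Uo : Matrix (Fin n) (Fin n) ℝ
  bf : Fin n → ℝ
  bi : Fin n → ℝ
  bc : Fin n → ℝ
  bo : Fin n → ℝ
  Wy : Matrix (Fin p) (Fin n) ℝ
  bY : Fin p → ℝ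

/-- LSTM state `(c, h)`. -/
abbrev State (n : ℕ) := (Fin n → ℝ) × (Fin n → ℝ)

/-- Augmented state `(c, h, d)`. -/
abbrev AugState (n p : ℕ) := (Fin n → ℝ) × (Fin n → ℝ) × (Fin p → ℝ)

variable {n m p : ℕ}

def stepC (S : LSTM n m p) (u : Fin m → ℝ) (c h : Fin n → ℝ) : Fin n → ℝ := fun j =>
  sigmoid ((S.Wf.mulVec u + S.Uf.mulVec h + S.bf) j) * c j +
    sigmoid ((S.Wi.mulVec u + S.Ui.mulVec h + S.bi) j) *
      Real.tanh ((S.Wc.mulVec u + S.Uc.mulVec h + S.bc) j)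

def stepH (S : LSTM n m p) (u : Fin m → ℝ) (c h : Fin n → ℝ) : Fin n → ℝ := fun j =>
  sigmoid ((S.Wo.mulVec u + S.Uo.mulVec h + S.bo) j) * Real.tanh (stepC S u c h j)

/-- One step of the LSTM dynamics `x⁺ = f(x, u)`. -/
def step (S : LSTM n m p) (x : State n) (u : Fin m → ℝ) : State n :=
  (stepC S u x.1 x.2, stepH S u x.1 x.2)

/-- Output map `g(x) = W_y h + b_y`. -/
def out (S : LSTM n m p) (x : State n) : Fin p → ℝ := S.Wy.mulVec x.2 + S.bY

/-- LSTM trajectory. -/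
def traj (S : LSTM n m p) (x0 : State n) (u : ℕ → Fin m → ℝ) : ℕ → State n
  | 0 => x0
  | k + 1 => step S (traj S x0 u k) (u k)

def sFb (S : LSTM n m p) (umax : ℝ) : ℝ := sigmoid (rowNorm3 umax S.Wf S.Uf S.bf)
def sIb (S : LSTM n m p) (umax : ℝ) : ℝ := sigmoid (rowNorm3 umax S.Wi S.Ui S.bi)
def sOb (S : LSTM n m p) (umax : ℝ) : ℝ := sigmoid (rowNorm3 umax S.Wo S.Uo S.bo)
def sCb (S : LSTM n m p) (umax : ℝ) : ℝ := Real.tanh (rowNorm3 umax S.Wc S.Uc S.bc)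
def sXb (S : LSTM n m p) (umax : ℝ) : ℝ :=
  Real.tanh (sIb S umax * sCb S umax / (1 - sFb S umax))
def alphaD (S : LSTM n m p) (umax : ℝ) : ℝ :=
  (1/4) * spec S.Uf * (sIb S umax * sCb S umax / (1 - sFb S umax)) +
    sIb S umax * spec S.Uc + (1/4) * spec S.Ui * sCb S umax
def betaD (S : LSTM n m p) (umax : ℝ) : ℝ :=
  (1/4) * spec S.Wf * (sIb S umax * sCb S umax / (1 - sFb S umax)) +
    sIb S umax * spec S.Wc + (1/4) * spec S.Wi * sCb S umax
def Adelta (S : LSTM n m p) (umax : ℝ) : Matrix (Fin 2) (Fin 2) ℝ :=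
  !![sFb S umax, alphaD S umax;
     sOb S umax * sFb S umax, alphaD S umax * sOb S umax + (1/4) * sXb S umax * spec S.Uo]
def Bdelta (S : LSTM n m p) (umax : ℝ) : Fin 2 → ℝ :=
  ![betaD S umax, betaD S umax * sOb S umax + (1/4) * sXb S umax * spec S.Wo]

def setU (m : ℕ) (umax : ℝ) : Set (Fin m → ℝ) := {u | vinf u ≤ umax}
def setH (n : ℕ) : Set (Fin n → ℝ) := {h | vinf h ≤ 1}
def setC (S : LSTM n m p) (umax : ℝ) : Set (Fin n → ℝ) :=
  {c | vinf c ≤ sIb S umax * sCb S umax / (1 - sFb S umax)}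
def setX (S : LSTM n m p) (umax : ℝ) : Set (State n) := (setC S umax) ×ˢ (setH n)
def setD (p : ℕ) (dmax : ℝ) : Set (Fin p → ℝ) := {d | vinf d ≤ dmax}

/-- Euclidean norm of the full state. -/
def xnorm {n : ℕ} (x : State n) : ℝ := Real.sqrt (∑ i, x.1 i ^ 2 + ∑ i, x.2 i ^ 2)

/-- Euclidean norm of the augmented state. -/
def chinorm {n p : ℕ} (χ : AugState n p) : ℝ :=
  Real.sqrt (∑ i, χ.1 i ^ 2 + ∑ i, χ.2.1 i ^ 2 + ∑ i, χ.2.2 i ^ 2)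

/-- Incremental input-to-state stability of the LSTM in `X` and `U`. -/
def deltaISS (S : LSTM n m p) (umax : ℝ) : Prop :=
  ∃ β γ, IsClassKL β ∧ IsClassKInf γ ∧
    ∀ (k : ℕ) (xa0 xb0 : State n), xa0 ∈ setX S umax → xb0 ∈ setX S umax →
      ∀ ua ub : ℕ → Fin m → ℝ,
        (∀ h < k, ua h ∈ setU m umax) → (∀ h < k, ub h ∈ setU m umax) →
        xnorm (traj S xa0 ua k - traj S xb0 ub k) ≤
          β (xnorm (xa0 - xb0)) k + γ (⨆ h ∈ Finset.range k, enorm (ua h - ub h))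

/-- Observer gains. -/
structure Gains (n p : ℕ) where
  Lf : Matrix (Fin n) (Fin p) ℝ
  Li : Matrix (Fin n) (Fin p) ℝ
  Lo : Matrix (Fin n) (Fin p) ℝ
  Ld : Matrix (Fin p) (Fin p) ℝ

/-- Componentwise saturation to `[-dmax, dmax]`. -/
def sat {p : ℕ} (dmax : ℝ) (v : Fin p → ℝ) : Fin p → ℝ := fun j =>
  min (max (v j) (-dmax)) dmax

/-- Observer output `ŷ = W_y ĥ + b_y + d̂`. -/
def yhat (S : LSTM n m p) (hh : Fin n → ℝ) (dh : Fin p → ℝ) : Fin p → ℝ :=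
  S.Wy.mulVec hh + S.bY + dh

def obsC (S : LSTM n m p) (G : Gains n p) (u : Fin m → ℝ) (y : Fin p → ℝ)
    (ch hh : Fin n → ℝ) (dh : Fin p → ℝ) : Fin n → ℝ := fun j =>
  sigmoid ((S.Wf.mulVec u + S.Uf.mulVec hh + S.bf + G.Lf.mulVec (y - yhat S hh dh)) j) * ch j +
    sigmoid ((S.Wi.mulVec u + S.Ui.mulVec hh + S.bi + G.Li.mulVec (y - yhat S hh dh)) j) *
      Real.tanh ((S.Wc.mulVec u + S.Uc.mulVec hh + S.bc) j)

def obsH (S : LSTM n m p) (G : Gains n p) (u : Fin m → ℝ) (y : Fin p → ℝ)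
    (ch hh : Fin n → ℝ) (dh : Fin p → ℝ) : Fin n → ℝ := fun j =>
  sigmoid ((S.Wo.mulVec u + S.Uo.mulVec hh + S.bo + G.Lo.mulVec (y - yhat S hh dh)) j) *
    Real.tanh (obsC S G u y ch hh dh j)

def obsD (S : LSTM n m p) (G : Gains n p) (dmax : ℝ) (y : Fin p → ℝ)
    (hh : Fin n → ℝ) (dh : Fin p → ℝ) : Fin p → ℝ :=
  sat dmax (dh + G.Ld.mulVec (y - yhat S hh dh))

/-- One step of the observer. -/
def obsStep (S : LSTM n m p) (G : Gains n p) (dmax : ℝ) (u : Fin m → ℝ) (y : Fin p → ℝ)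
    (χ : AugState n p) : AugState n p :=
  (obsC S G u y χ.1 χ.2.1 χ.2.2, obsH S G u y χ.1 χ.2.1 χ.2.2, obsD S G dmax y χ.2.1 χ.2.2)

/-- Observer trajectory. -/
def obsTraj (S : LSTM n m p) (G : Gains n p) (dmax : ℝ) (u : ℕ → Fin m → ℝ)
    (y : ℕ → Fin p → ℝ) (χ0 : AugState n p) : ℕ → AugState n p
  | 0 => χ0
  | k + 1 => obsStep S G dmax (u k) (y k) (obsTraj S G dmax u y χ0 k)

def sFh (S : LSTM n m p) (G : Gains n p) (umax dmax : ℝ) : ℝ :=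
  sigmoid (rowNorm5 umax S.Wf (S.Uf - G.Lf * S.Wy) S.bf (G.Lf * S.Wy) (2 * dmax) G.Lf)
def sIh (S : LSTM n m p) (G : Gains n p) (umax dmax : ℝ) : ℝ :=
  sigmoid (rowNorm5 umax S.Wi (S.Ui - G.Li * S.Wy) S.bi (G.Li * S.Wy) (2 * dmax) G.Li)
def sOh (S : LSTM n m p) (G : Gains n p) (umax dmax : ℝ) : ℝ :=
  sigmoid (rowNorm5 umax S.Wo (S.Uo - G.Lo * S.Wy) S.bo (G.Lo * S.Wy) (2 * dmax) G.Lo)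
def alphaH (S : LSTM n m p) (G : Gains n p) (umax : ℝ) : ℝ :=
  (1/4) * (sIb S umax * sCb S umax / (1 - sFb S umax)) * spec (S.Uf - G.Lf * S.Wy) +
    sIb S umax * spec S.Uc + (1/4) * sCb S umax * spec (S.Ui - G.Li * S.Wy)
def betaH (S : LSTM n m p) (G : Gains n p) (umax : ℝ) : ℝ :=
  (1/4) * (sIb S umax * sCb S umax / (1 - sFb S umax)) * spec G.Lf +
    (1/4) * sCb S umax * spec G.Li
def gammaH (S : LSTM n m p) (G : Gains n p) (umax dmax : ℝ) : ℝ :=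
  sOh S G umax dmax * alphaH S G umax + (1/4) * sXb S umax * spec (S.Uo - G.Lo * S.Wy)
def Ad (S : LSTM n m p) (G : Gains n p) (umax dmax : ℝ) : Matrix (Fin 3) (Fin 3) ℝ :=
  !![sFh S G umax dmax, alphaH S G umax, betaH S G umax;
     sOh S G umax dmax * sFh S G umax dmax, gammaH S G umax dmax,
       sOh S G umax dmax * betaH S G umax + (1/4) * sXb S umax * spec G.Lo;
     0, spec (G.Ld * S.Wy), spec ((1 : Matrix (Fin p) (Fin p) ℝ) - G.Ld)]

def setChat (S : LSTM n m p) (G : Gains n p) (umax dmax : ℝ) : Set (Fin n → ℝ) :=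
  {c | vinf c ≤ sIh S G umax dmax * sCb S umax / (1 - sFh S G umax dmax)}
def setIhat (S : LSTM n m p) (G : Gains n p) (umax dmax : ℝ) : Set (AugState n p) :=
  (setChat S G umax dmax) ×ˢ ((setH n) ×ˢ (setD p dmax))

/-- Incremental Lyapunov function for the LSTM. -/
def Vs {n : ℕ} (Ps : Matrix (Fin 2) (Fin 2) ℝ) (xa xb : State n) : ℝ :=
  wnorm Ps ![enorm (xa.1 - xb.1), enorm (xa.2 - xb.2)]

/-- Lyapunov function for the observer estimation error. -/
def Vo {n p : ℕ} (Po : Matrix (Fin 3) (Fin 3) ℝ) (χh χ : AugState n p) : ℝ :=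
  wnorm Po ![enorm (χh.1 - χ.1), enorm (χh.2.1 - χ.2.1), enorm (χh.2.2 - χ.2.2)]

/-- Disturbance-augmented LSTM update applied to the observer state. -/
def faug (S : LSTM n m p) (χ : AugState n p) (u : Fin m → ℝ) : AugState n p :=
  (stepC S u χ.1 χ.2.1, stepH S u χ.1 χ.2.1, χ.2.2)

def alphaBar (S : LSTM n m p) (G : Gains n p) (umax dmax : ℝ) : ℝ :=
  (1/4) * (sIh S G umax dmax * sCb S umax / (1 - sFh S G umax dmax)) * spec (G.Lf * S.Wy) +
    (1/4) * sCb S umax * spec (G.Li * S.Wy)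
def betaBar (S : LSTM n m p) (G : Gains n p) (umax dmax : ℝ) : ℝ :=
  (1/4) * (sIh S G umax dmax * sCb S umax / (1 - sFh S G umax dmax)) * spec G.Lf +
    (1/4) * sCb S umax * spec G.Li
def gammaBar (S : LSTM n m p) (G : Gains n p) (umax dmax : ℝ) : ℝ :=
  (1/4) * Real.tanh (sIh S G umax dmax * sCb S umax / (1 - sFh S G umax dmax))
def Lmat (S : LSTM n m p) (G : Gains n p) (umax dmax : ℝ) : Matrix (Fin 3) (Fin 3) ℝ :=
  !![0, alphaBar S G umax dmax, betaBar S G umax dmax;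
     0, gammaBar S G umax dmax * spec (G.Lo * S.Wy) + sOb S umax * alphaBar S G umax dmax,
       gammaBar S G umax dmax * spec G.Lo + sOb S umax * betaBar S G umax dmax;
     0, spec (G.Ld * S.Wy), spec G.Ld]


/-! ### Auxiliary lemmas for statement5 -/

section Statement5Aux

variable {n m p : ℕ}

lemma sigmoid_pos' (z : ℝ) : 0 < sigmoid z := by unfold sigmoid; positivity

lemma sigmoid_lt_one' (z : ℝ) : sigmoid z < 1 := by
  unfold sigmoid
  rw [div_lt_one (by positivity)]
  linarith [Real.exp_pos (-z)]

lemma sigmoid_mono' : Monotone sigmoid := by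
  intro a b hab
  unfold sigmoid
  have : Real.exp (-b) ≤ Real.exp (-a) := Real.exp_le_exp.2 (by linarith)
  apply div_le_div_of_nonneg_left (by norm_num) (by positivity) (by linarith)

lemma abs_sinh_lt_cosh' (x : ℝ) : |Real.sinh x| < Real.cosh x := by
  have h1 := Real.cosh_sq_sub_sinh_sq x
  have h2 := Real.cosh_pos x
  have := abs_nonneg (Real.sinh x)
  nlinarith [sq_abs (Real.sinh x)]

lemma abs_tanh_lt_one' (x : ℝ) : |Real.tanh x| < 1 := by
  rw [Real.tanh_eq_sinh_div_cosh, abs_div, abs_of_pos (Real.cosh_pos x),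
    div_lt_one (Real.cosh_pos x)]
  exact abs_sinh_lt_cosh' x

lemma tanh_mono' : Monotone Real.tanh := by
  intro a b hab
  rw [Real.tanh_eq_sinh_div_cosh, Real.tanh_eq_sinh_div_cosh,
    div_le_div_iff₀ (Real.cosh_pos a) (Real.cosh_pos b)]
  have h : Real.sinh b * Real.cosh a - Real.sinh a * Real.cosh b = Real.sinh (b - a) := by
    rw [Real.sinh_sub]; ring
  have h2 : 0 ≤ Real.sinh (b - a) := by
    rw [← Real.sinh_zero]; exact Real.sinh_le_sinh.2 (by linarith)
  linarith

lemma continuous_tanh' : Continuous Real.tanh := by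
  have : Real.tanh = fun x => Real.sinh x / Real.cosh x := funext Real.tanh_eq_sinh_div_cosh
  rw [this]
  exact Real.continuous_sinh.div Real.continuous_cosh fun x => (Real.cosh_pos x).ne'

lemma continuous_sigmoid' : Continuous sigmoid := by
  unfold sigmoid
  exact continuous_const.div (continuous_const.add (Real.continuous_exp.comp continuous_neg))
    fun z => by positivity

lemma abs_tanh_le_of_abs_le {z b : ℝ} (h : |z| ≤ b) : |Real.tanh z| ≤ Real.tanh b := by
  rw [abs_le] at h ⊢
  constructor
  · have := tanh_mono' h.1
    rwa [Real.tanh_neg] at this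
  · exact tanh_mono' h.2

lemma abs_le_vinf' {k : ℕ} (v : Fin k → ℝ) (i : Fin k) : |v i| ≤ vinf v := by
  unfold vinf
  exact le_ciSup (f := fun i => |v i|) (Set.finite_range _).bddAbove i

lemma vinf_le' {k : ℕ} {v : Fin k → ℝ} {a : ℝ} (h : ∀ i, |v i| ≤ a) (ha : 0 ≤ a) :
    vinf v ≤ a := Real.iSup_le h ha

lemma rowNorm3_nonneg {umax : ℝ} (W : Matrix (Fin n) (Fin m) ℝ)
    (U : Matrix (Fin n) (Fin n) ℝ) (b : Fin n → ℝ) : 0 ≤ rowNorm3 umax W U b := by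
  apply Real.iSup_nonneg
  intro i
  positivity

lemma gate_abs_le {W : Matrix (Fin n) (Fin m) ℝ} {U : Matrix (Fin n) (Fin n) ℝ} {b : Fin n → ℝ}
    {umax : ℝ} (hu : 0 < umax) {u : Fin m → ℝ} {h : Fin n → ℝ}
    (hum : vinf u ≤ umax) (hh : vinf h ≤ 1) (j : Fin n) :
    |(W.mulVec u + U.mulVec h + b) j| ≤ rowNorm3 umax W U b := by
  have h1 : |W.mulVec u j| ≤ ∑ k, |umax * W j k| := by
    simp only [Matrix.mulVec, dotProduct]
    refine (Finset.abs_sum_le_sum_abs _ _).trans (Finset.sum_le_sum fun k _ => ?_)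
    rw [abs_mul, abs_mul, abs_of_pos hu, mul_comm umax]
    exact mul_le_mul_of_nonneg_left ((abs_le_vinf' u k).trans hum) (abs_nonneg _)
  have h2 : |U.mulVec h j| ≤ ∑ k, |U j k| := by
    simp only [Matrix.mulVec, dotProduct]
    refine (Finset.abs_sum_le_sum_abs _ _).trans (Finset.sum_le_sum fun k _ => ?_)
    rw [abs_mul]
    calc |U j k| * |h k| ≤ |U j k| * 1 :=
          mul_le_mul_of_nonneg_left ((abs_le_vinf' h k).trans hh) (abs_nonneg _)
      _ = |U j k| := mul_one _
  have h3 : |(W.mulVec u + U.mulVec h + b) j| ≤ ∑ k, |umax * W j k| + ∑ k, |U j k| + |b j| := by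
    simp only [Pi.add_apply]
    calc |W.mulVec u j + U.mulVec h j + b j|
        ≤ |W.mulVec u j| + |U.mulVec h j| + |b j| := by
          exact (abs_add_le _ _).trans (by gcongr; exact abs_add_le _ _)
      _ ≤ _ := by gcongr
  refine h3.trans ?_
  unfold rowNorm3
  exact le_ciSup (f := fun i => ∑ k, |umax * W i k| + ∑ k, |U i k| + |b i|)
    (Set.finite_range _).bddAbove j

lemma sCb_nonneg (S : LSTM n m p) (umax : ℝ) : 0 ≤ sCb S umax := by
  unfold sCb
  have := tanh_mono' (rowNorm3_nonneg (umax := umax) S.Wc S.Uc S.bc)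
  rwa [Real.tanh_zero] at this

lemma one_sub_sFb_pos (S : LSTM n m p) (umax : ℝ) : 0 < 1 - sFb S umax :=
  sub_pos.2 (sigmoid_lt_one' _)

lemma cBound_nonneg (S : LSTM n m p) (umax : ℝ) :
    0 ≤ sIb S umax * sCb S umax / (1 - sFb S umax) :=
  div_nonneg (mul_nonneg (sigmoid_pos' _).le (sCb_nonneg S umax)) (one_sub_sFb_pos S umax).le

lemma step_mem (S : LSTM n m p) {umax : ℝ} (hu : 0 < umax) {x : State n} {u : Fin m → ℝ}
    (hx : x ∈ setX S umax) (hum : u ∈ setU m umax) : step S x u ∈ setX S umax := by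
  obtain ⟨hc, hh⟩ := hx
  have hc' : vinf x.1 ≤ sIb S umax * sCb S umax / (1 - sFb S umax) := hc
  have hh' : vinf x.2 ≤ 1 := hh
  have hum' : vinf u ≤ umax := hum
  set M := sIb S umax * sCb S umax / (1 - sFb S umax) with hM
  have hMnn : 0 ≤ M := cBound_nonneg S umax
  constructor
  · -- c⁺ ∈ setC
    show vinf (stepC S u x.1 x.2) ≤ M
    refine vinf_le' (fun j => ?_) hMnn
    have hf : sigmoid ((S.Wf.mulVec u + S.Uf.mulVec x.2 + S.bf) j) ≤ sFb S umax :=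
      sigmoid_mono' ((le_abs_self _).trans (gate_abs_le hu hum' hh' j))
    have hi : sigmoid ((S.Wi.mulVec u + S.Ui.mulVec x.2 + S.bi) j) ≤ sIb S umax :=
      sigmoid_mono' ((le_abs_self _).trans (gate_abs_le hu hum' hh' j))
    have htc : |Real.tanh ((S.Wc.mulVec u + S.Uc.mulVec x.2 + S.bc) j)| ≤ sCb S umax :=
      abs_tanh_le_of_abs_le (gate_abs_le hu hum' hh' j)
    have hcj : |x.1 j| ≤ M := (abs_le_vinf' x.1 j).trans hc'
    have key : |stepC S u x.1 x.2 j| ≤ sFb S umax * M + sIb S umax * sCb S umax := by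
      unfold stepC
      refine (abs_add_le _ _).trans ?_
      gcongr
      · rw [abs_mul, abs_of_pos (sigmoid_pos' _)]
        exact mul_le_mul hf hcj (abs_nonneg _) ((sigmoid_pos' _).le.trans hf)
      · rw [abs_mul, abs_of_pos (sigmoid_pos' _)]
        exact mul_le_mul hi htc (abs_nonneg _) ((sigmoid_pos' _).le.trans hi)
    have hMeq : sIb S umax * sCb S umax = M * (1 - sFb S umax) := by
      rw [hM, div_mul_cancel₀ _ (one_sub_sFb_pos S umax).ne']
    calc |stepC S u x.1 x.2 j| ≤ sFb S umax * M + sIb S umax * sCb S umax := key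
      _ = M := by rw [hMeq]; ring
  · -- h⁺ ∈ setH
    show vinf (stepH S u x.1 x.2) ≤ 1
    refine vinf_le' (fun j => ?_) zero_le_one
    unfold stepH
    rw [abs_mul, abs_of_pos (sigmoid_pos' _)]
    calc sigmoid _ * |Real.tanh _| ≤ 1 * 1 :=
          mul_le_mul (sigmoid_lt_one' _).le (abs_tanh_lt_one' _).le (abs_nonneg _) zero_le_one
      _ = 1 := mul_one 1

lemma continuous_mulVec' {a b : ℕ} (M : Matrix (Fin a) (Fin b) ℝ) :
    Continuous fun v => M.mulVec v := by
  refine continuous_pi fun j => ?_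
  simp only [Matrix.mulVec, dotProduct]
  exact continuous_finset_sum _ fun k _ => continuous_const.mul (continuous_apply k)

lemma cont_gate (W : Matrix (Fin n) (Fin m) ℝ) (U : Matrix (Fin n) (Fin n) ℝ)
    (b : Fin n → ℝ) (u : Fin m → ℝ) (j : Fin n) :
    Continuous fun x : State n => (W.mulVec u + U.mulVec x.2 + b) j := by
  simp only [Pi.add_apply]
  exact (continuous_const.add
    ((continuous_apply j).comp ((continuous_mulVec' U).comp continuous_snd))).add
    continuous_const

lemma continuous_stepC (S : LSTM n m p) (u : Fin m → ℝ) (j : Fin n) :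
    Continuous fun x : State n => stepC S u x.1 x.2 j := by
  unfold stepC
  exact ((continuous_sigmoid'.comp (cont_gate S.Wf S.Uf S.bf u j)).mul
    ((continuous_apply j).comp continuous_fst)).add
    ((continuous_sigmoid'.comp (cont_gate S.Wi S.Ui S.bi u j)).mul
    (continuous_tanh'.comp (cont_gate S.Wc S.Uc S.bc u j)))

lemma continuous_step (S : LSTM n m p) (u : Fin m → ℝ) :
    Continuous fun x : State n => step S x u := by
  refine Continuous.prodMk (continuous_pi fun j => continuous_stepC S u j)
    (continuous_pi fun j => ?_)
  show Continuous fun x : State n =>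
    sigmoid ((S.Wo.mulVec u + S.Uo.mulVec x.2 + S.bo) j) * Real.tanh (stepC S u x.1 x.2 j)
  exact (continuous_sigmoid'.comp (cont_gate S.Wo S.Uo S.bo u j)).mul
    (continuous_tanh'.comp (continuous_stepC S u j))

lemma vinf_ball_compact {k : ℕ} {M : ℝ} (hM : 0 ≤ M) :
    IsCompact {v : Fin k → ℝ | vinf v ≤ M} := by
  have : {v : Fin k → ℝ | vinf v ≤ M} = Set.pi Set.univ fun _ : Fin k => Set.Icc (-M) M := by
    ext v
    simp only [Set.mem_setOf_eq, Set.mem_pi, Set.mem_univ, forall_true_left, Set.mem_Icc,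
      ← abs_le]
    exact ⟨fun h i => (abs_le_vinf' v i).trans h, fun h => vinf_le' h hM⟩
  rw [this]
  exact isCompact_univ_pi fun _ => isCompact_Icc

lemma setX_compact (S : LSTM n m p) (umax : ℝ) : IsCompact (setX S umax) :=
  (vinf_ball_compact (cBound_nonneg S umax)).prod (vinf_ball_compact zero_le_one)

lemma xnorm_nonneg' (x : State n) : 0 ≤ xnorm x := Real.sqrt_nonneg _

lemma dist_le_xnorm (x y : State n) : dist x y ≤ xnorm (x - y) := by
  have hsums : ∀ i, (x.1 i - y.1 i) ^ 2 ≤ ∑ i, (x - y).1 i ^ 2 + ∑ i, (x - y).2 i ^ 2 := by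
    intro i
    have h1 : (x.1 i - y.1 i) ^ 2 ≤ ∑ i, (x - y).1 i ^ 2 :=
      Finset.single_le_sum (fun i _ => sq_nonneg ((x - y).1 i)) (Finset.mem_univ i)
    have h2 : 0 ≤ ∑ i, (x - y).2 i ^ 2 := Finset.sum_nonneg fun i _ => sq_nonneg _
    linarith
  have hsums2 : ∀ i, (x.2 i - y.2 i) ^ 2 ≤ ∑ i, (x - y).1 i ^ 2 + ∑ i, (x - y).2 i ^ 2 := by
    intro i
    have h1 : (x.2 i - y.2 i) ^ 2 ≤ ∑ i, (x - y).2 i ^ 2 :=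
      Finset.single_le_sum (fun i _ => sq_nonneg ((x - y).2 i)) (Finset.mem_univ i)
    have h2 : 0 ≤ ∑ i, (x - y).1 i ^ 2 := Finset.sum_nonneg fun i _ => sq_nonneg _
    linarith
  have habs : ∀ (a : ℝ), a ^ 2 ≤ ∑ i, (x - y).1 i ^ 2 + ∑ i, (x - y).2 i ^ 2 →
      |a| ≤ xnorm (x - y) := by
    intro a ha
    rw [← Real.sqrt_sq_eq_abs]
    exact Real.sqrt_le_sqrt ha
  rw [Prod.dist_eq]
  refine max_le ?_ ?_
  · refine (dist_pi_le_iff (xnorm_nonneg' _)).2 fun i => ?_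
    rw [Real.dist_eq]
    exact habs _ (hsums i)
  · refine (dist_pi_le_iff (xnorm_nonneg' _)).2 fun i => ?_
    rw [Real.dist_eq]
    exact habs _ (hsums2 i)

lemma eq_of_xnorm_sub_eq_zero {x y : State n} (h : xnorm (x - y) = 0) : x = y := by
  unfold xnorm at h
  have h1 : 0 ≤ ∑ i, (x - y).1 i ^ 2 := Finset.sum_nonneg fun i _ => sq_nonneg _
  have h2 : 0 ≤ ∑ i, (x - y).2 i ^ 2 := Finset.sum_nonneg fun i _ => sq_nonneg _
  have hz : ∑ i, (x - y).1 i ^ 2 + ∑ i, (x - y).2 i ^ 2 = 0 := by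
    have := (Real.sqrt_eq_zero (by linarith)).1 h
    linarith
  have hz1 : ∑ i, (x - y).1 i ^ 2 = 0 := by linarith
  have hz2 : ∑ i, (x - y).2 i ^ 2 = 0 := by linarith
  have e1 : ∀ i, (x - y).1 i ^ 2 = 0 :=
    fun i => (Finset.sum_eq_zero_iff_of_nonneg fun i _ => sq_nonneg _).1 hz1 i (Finset.mem_univ i)
  have e2 : ∀ i, (x - y).2 i ^ 2 = 0 :=
    fun i => (Finset.sum_eq_zero_iff_of_nonneg fun i _ => sq_nonneg _).1 hz2 i (Finset.mem_univ i)
  have hx1 : x.1 = y.1 :=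
    funext fun i => sub_eq_zero.1 ((pow_eq_zero_iff (n := 2) (by norm_num)).1 (e1 i))
  have hx2 : x.2 = y.2 :=
    funext fun i => sub_eq_zero.1 ((pow_eq_zero_iff (n := 2) (by norm_num)).1 (e2 i))
  exact Prod.ext hx1 hx2

lemma traj_fixed (S : LSTM n m p) {x : State n} {u : Fin m → ℝ}
    (hfix : step S x u = x) (k : ℕ) : traj S x (fun _ => u) k = x := by
  induction k with
  | zero => rfl
  | succ k ih => simp [traj, ih, hfix]

lemma traj_shift (S : LSTM n m p) (x0 : State n) (u : Fin m → ℝ) (k : ℕ) :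
    traj S (step S x0 u) (fun _ => u) k = traj S x0 (fun _ => u) (k + 1) := by
  induction k with
  | zero => rfl
  | succ k ih => simp [traj, ih]

end Statement5Aux

/-- under δISS, for every `(u, y)` there is a unique equilibrium
state `x*` and a unique output disturbance `d*` (Lemma 2). -/
theorem statement5 {n m p : ℕ} (S : LSTM n m p) (umax : ℝ) (hu : 0 < umax)
    (hISS : deltaISS S umax) :
    ∀ u ∈ setU m umax, ∀ y : Fin p → ℝ,
      ∃! xd : State n × (Fin p → ℝ),
        xd.1 ∈ setX S umax ∧ step S xd.1 u = xd.1 ∧ y = out S xd.1 + xd.2 := by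
  intro u huU y
  obtain ⟨β, γ, hKL, hKinf, hbound⟩ := hISS
  have hγ0 : γ 0 = 0 := hKinf.2.1
  set uu : ℕ → Fin m → ℝ := fun _ => u with huu
  have huuU : ∀ k : ℕ, ∀ h < k, uu h ∈ setU m umax := fun _ _ _ => huU
  have hsup : ∀ k : ℕ, (⨆ h ∈ Finset.range k, enorm (uu h - uu h)) = 0 := by
    intro k
    have he : ∀ h : ℕ, enorm (uu h - uu h) = 0 := by
      intro h; simp [enorm]
    exact le_antisymm
      (Real.iSup_le (fun h => Real.iSup_le (fun _ => (he h).le) le_rfl) le_rfl)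
      (Real.iSup_nonneg fun h => Real.iSup_nonneg fun _ => (he h).symm.le)
  have key : ∀ xa xb : State n, xa ∈ setX S umax → xb ∈ setX S umax → ∀ k : ℕ,
      xnorm (traj S xa uu k - traj S xb uu k) ≤ β (xnorm (xa - xb)) k := by
    intro xa xb hxa hxb k
    have := hbound k xa xb hxa hxb uu uu (huuU k) (huuU k)
    rwa [hsup k, hγ0, add_zero] at this
  have hβlim : ∀ s : ℝ, 0 ≤ s → Tendsto (fun k => β s k) atTop (nhds 0) := by
    intro s hs
    rcases eq_or_lt_of_le hs with he | hp
    · have hz : ∀ k, β s k = 0 := fun k => by rw [← he]; exact (hKL.1 k).2.2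
      simp only [hz]
      exact tendsto_const_nhds
    · exact (hKL.2.1 s hp).2
  -- uniqueness of the fixed point
  have huniq : ∀ xa xb : State n, xa ∈ setX S umax → xb ∈ setX S umax →
      step S xa u = xa → step S xb u = xb → xa = xb := by
    intro xa xb hxa hxb hfa hfb
    have hall : ∀ k : ℕ, xnorm (xa - xb) ≤ β (xnorm (xa - xb)) k := by
      intro k
      have := key xa xb hxa hxb k
      rwa [traj_fixed S hfa, traj_fixed S hfb] at this
    by_contra hne
    have hpos : 0 < xnorm (xa - xb) :=
      lt_of_le_of_ne (xnorm_nonneg' _) fun h0 => hne (eq_of_xnorm_sub_eq_zero h0.symm)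
    have hle : xnorm (xa - xb) ≤ 0 := ge_of_tendsto' (hβlim _ hpos.le) hall
    linarith
  -- existence of the fixed point
  have hx0 : ((0, 0) : State n) ∈ setX S umax := by
    constructor
    · exact vinf_le' (fun i => by simpa using cBound_nonneg S umax) (cBound_nonneg S umax)
    · exact vinf_le' (fun i => by simp) zero_le_one
  set x0 : State n := (0, 0) with hx0def
  have hmem : ∀ k : ℕ, traj S x0 uu k ∈ setX S umax := by
    intro k
    induction k with
    | zero => exact hx0
    | succ k ih => exact step_mem S hu ih huU
  obtain ⟨xs, hxsX, φ, hφ, hconv⟩ := (setX_compact S umax).tendsto_subseq hmem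
  set d0 : ℝ := xnorm (step S x0 u - x0) with hd0
  have hstepdiff : ∀ k : ℕ, dist (traj S x0 uu (k + 1)) (traj S x0 uu k) ≤ β d0 k := by
    intro k
    have h1 := key (step S x0 u) x0 (step_mem S hu hx0 huU) hx0 k
    rw [traj_shift S x0 u k] at h1
    exact (dist_le_xnorm _ _).trans h1
  have h1 : Tendsto (fun k => traj S x0 uu (φ k + 1)) atTop (nhds xs) := by
    rw [tendsto_iff_dist_tendsto_zero]
    have hub : ∀ k, dist (traj S x0 uu (φ k + 1)) xs ≤
        β d0 (φ k) + dist (traj S x0 uu (φ k)) xs := fun k =>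
      (dist_triangle _ (traj S x0 uu (φ k)) _).trans
        (add_le_add_left (hstepdiff (φ k)) _)
    have hlim : Tendsto (fun k => β d0 (φ k) + dist (traj S x0 uu (φ k)) xs) atTop (nhds 0) := by
      have hA : Tendsto (fun k => β d0 (φ k)) atTop (nhds 0) :=
        (hβlim d0 (xnorm_nonneg' _)).comp hφ.tendsto_atTop
      have hB : Tendsto (fun k => dist (traj S x0 uu (φ k)) xs) atTop (nhds 0) :=
        tendsto_iff_dist_tendsto_zero.1 hconv
      simpa using hA.add hB
    exact squeeze_zero (fun k => dist_nonneg) hub hlim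
  have h2 : Tendsto (fun k => traj S x0 uu (φ k + 1)) atTop (nhds (step S xs u)) := by
    have heq : (fun k => traj S x0 uu (φ k + 1)) =
        fun k => step S (traj S x0 uu (φ k)) u := rfl
    rw [heq]
    exact ((continuous_step S u).tendsto xs).comp hconv
  have hfix : step S xs u = xs := tendsto_nhds_unique h2 h1
  -- assemble
  refine ⟨(xs, y - out S xs), ⟨hxsX, hfix, (add_sub_cancel _ _).symm⟩, ?_⟩
  rintro ⟨x', d'⟩ ⟨hx', hfix', hy'⟩
  have hxeq : x' = xs := huniq x' xs hx' hxsX hfix' hfix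
  subst hxeq
  have hd : d' = y - out S x' := eq_sub_of_add_eq' hy'.symm
  rw [hd]

end LSTMmpc
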